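/- If a_(1) ⊗ d(a_(2)) = a_(2) ⊗ d(a_(1)) in A⊗H for all a ∈ A, then 𝒮 is anti-multiplicative for ∘ on the cotensor product: for every Σ_i m_i ⊗ n_i ∈ H1□H1, Σ_i 𝒮(m_i ∘ n_i) = Σ_i 𝒮(n_i) ∘ 𝒮(m_i). (Proposition 2.7(i).) -/

import Mathlib

open TensorProduct

noncomputable section

variable (k A H : Type*) [Field k] [Ring A] [Ring H]
  [HopfAlgebra k A] [HopfAlgebra k H]

/-- `t(a⊗h) = d(a)h`. -/
def tmap (d : A →ₗ[k] H) : A ⊗[k] H →ₗ[k] H :=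
  LinearMap.mul' k H ∘ₗ map d LinearMap.id

/-- `s(a⊗h) = ε(a)h`. -/
def smap : A ⊗[k] H →ₗ[k] H :=
  (TensorProduct.lid k H).toLinearMap ∘ₗ map (Coalgebra.counit : A →ₗ[k] k) LinearMap.id

/-- `i(h) = 1⊗h`. -/
def imap : H →ₗ[k] A ⊗[k] H := TensorProduct.mk k A H 1

/-- The tensor-product coproduct `Δ(a⊗h) = (a₁⊗h₁) ⊗ (a₂⊗h₂)` on `H1 = A ⊗ H`. -/
def comul1 : A ⊗[k] H →ₗ[k] (A ⊗[k] H) ⊗[k] (A ⊗[k] H) :=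
  (tensorTensorTensorComm k A A H H).toLinearMap ∘ₗ
    map (Coalgebra.comul : A →ₗ[k] A ⊗[k] A) (Coalgebra.comul : H →ₗ[k] H ⊗[k] H)

/-- The tensor-product counit `ε(a⊗h) = ε(a)ε(h)` on `H1 = A ⊗ H`. -/
def counit1 : A ⊗[k] H →ₗ[k] k :=
  (TensorProduct.lid k k).toLinearMap ∘ₗ
    map (Coalgebra.counit : A →ₗ[k] k) (Coalgebra.counit : H →ₗ[k] k)

/-- The left coaction `DL = (t⊗id)Δ`. -/
def DLmap (d : A →ₗ[k] H) : A ⊗[k] H →ₗ[k] H ⊗[k] (A ⊗[k] H) :=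
  map (tmap k A H d) LinearMap.id ∘ₗ comul1 k A H

/-- The right coaction `DR = (id⊗s)Δ`. -/
def DRmap : A ⊗[k] H →ₗ[k] (A ⊗[k] H) ⊗[k] H :=
  map LinearMap.id (smap k A H) ∘ₗ comul1 k A H

/-- The second product `(a⊗h)∘(b⊗g) = ε(h) ab ⊗ g`. -/
def circ : (A ⊗[k] H) ⊗[k] (A ⊗[k] H) →ₗ[k] A ⊗[k] H :=
  map (LinearMap.mul' k A)
      ((TensorProduct.lid k H).toLinearMap ∘ₗ map (Coalgebra.counit : H →ₗ[k] k) LinearMap.id)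
    ∘ₗ (tensorTensorTensorComm k A H A H).toLinearMap

/-- The quantum groupoid antipode `𝒮(a⊗h) = S(a₁) ⊗ d(a₂)h`. -/
def SS (d : A →ₗ[k] H) : A ⊗[k] H →ₗ[k] A ⊗[k] H :=
  map (HopfAlgebra.antipode (R := k) : A →ₗ[k] A) (tmap k A H d)
    ∘ₗ (TensorProduct.assoc k A A H).toLinearMap
    ∘ₗ map (Coalgebra.comul : A →ₗ[k] A ⊗[k] A) LinearMap.id

/-- The smash product multiplication `(a⊗h)(b⊗g) = a(h₁▷b) ⊗ h₂g`. -/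
def smashMul (act : H ⊗[k] A →ₗ[k] A) :
    (A ⊗[k] H) ⊗[k] (A ⊗[k] H) →ₗ[k] A ⊗[k] H :=
  map (LinearMap.mul' k A) LinearMap.id
  ∘ₗ (TensorProduct.assoc k A A H).symm.toLinearMap
  ∘ₗ map LinearMap.id
      (map act (LinearMap.mul' k H)
        ∘ₗ (tensorTensorTensorComm k H H A H).toLinearMap)
  ∘ₗ (TensorProduct.assoc k A (H ⊗[k] H) (A ⊗[k] H)).toLinearMap
  ∘ₗ map (map LinearMap.id (Coalgebra.comul : H →ₗ[k] H ⊗[k] H)) LinearMap.id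

/-- The cotensor product `H1□H1`. -/
def cot (d : A →ₗ[k] H) : Set ((A ⊗[k] H) ⊗[k] (A ⊗[k] H)) :=
  {x | (TensorProduct.assoc k (A ⊗[k] H) H (A ⊗[k] H)).toLinearMap
        (map (DRmap k A H) LinearMap.id x) = map LinearMap.id (DLmap k A H d) x}

/-- A Hopf (algebra) crossed module. -/
structure HopfCrossedModule (act : H ⊗[k] A →ₗ[k] A) (d : A →ₗ[k] H) : Prop where
  /-- `(hg)▷a = h▷(g▷a)` -/
  act_mul : ∀ (h g : H) (a : A), act ((h * g) ⊗ₜ[k] a) = act (h ⊗ₜ[k] act (g ⊗ₜ[k] a))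
  /-- `1▷a = a` -/
  act_one : ∀ a : A, act ((1 : H) ⊗ₜ[k] a) = a
  /-- `h▷(ab) = (h₁▷a)(h₂▷b)` -/
  act_mul_alg : act ∘ₗ map LinearMap.id (LinearMap.mul' k A)
      = LinearMap.mul' k A ∘ₗ map act act
          ∘ₗ (tensorTensorTensorComm k H H A A).toLinearMap
          ∘ₗ map (Coalgebra.comul : H →ₗ[k] H ⊗[k] H) LinearMap.id
  /-- `h▷1 = ε(h)1` -/
  act_unit : ∀ h : H, act (h ⊗ₜ[k] (1 : A)) = (Coalgebra.counit h : k) • (1 : A)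
  /-- `Δ(h▷a) = (h₁▷a₁)⊗(h₂▷a₂)` -/
  act_comul : (Coalgebra.comul : A →ₗ[k] A ⊗[k] A) ∘ₗ act
      = map act act ∘ₗ (tensorTensorTensorComm k H H A A).toLinearMap
          ∘ₗ map (Coalgebra.comul : H →ₗ[k] H ⊗[k] H) (Coalgebra.comul : A →ₗ[k] A ⊗[k] A)
  /-- `ε(h▷a) = ε(h)ε(a)` -/
  act_counit : ∀ (h : H) (a : A),
      (Coalgebra.counit (act (h ⊗ₜ[k] a)) : k) = Coalgebra.counit h * Coalgebra.counit a
  /-- `h₁ ⊗ (h₂▷a) = h₂ ⊗ (h₁▷a)` -/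
  act_cocomm : map LinearMap.id act ∘ₗ (TensorProduct.assoc k H H A).toLinearMap
        ∘ₗ map (Coalgebra.comul : H →ₗ[k] H ⊗[k] H) LinearMap.id
      = map LinearMap.id act ∘ₗ (TensorProduct.assoc k H H A).toLinearMap
        ∘ₗ map ((TensorProduct.comm k H H).toLinearMap
              ∘ₗ (Coalgebra.comul : H →ₗ[k] H ⊗[k] H)) LinearMap.id
  /-- `d` is multiplicative -/
  d_mul : ∀ a b : A, d (a * b) = d a * d b
  /-- `d(1) = 1` -/
  d_one : d 1 = 1
  /-- `d` is comultiplicative -/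
  d_comul : (Coalgebra.comul : H →ₗ[k] H ⊗[k] H) ∘ₗ d
      = map d d ∘ₗ (Coalgebra.comul : A →ₗ[k] A ⊗[k] A)
  /-- `ε∘d = ε` -/
  d_counit : (Coalgebra.counit : H →ₗ[k] k) ∘ₗ d = (Coalgebra.counit : A →ₗ[k] k)
  /-- `d(h▷a) = h₁ d(a) S(h₂)` -/
  d_act : d ∘ₗ act = LinearMap.mul' k H
      ∘ₗ map LinearMap.id (LinearMap.mul' k H
            ∘ₗ map LinearMap.id (HopfAlgebra.antipode (R := k) : H →ₗ[k] H)
            ∘ₗ (TensorProduct.comm k H H).toLinearMap)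
      ∘ₗ (TensorProduct.assoc k H H H).toLinearMap
      ∘ₗ map (Coalgebra.comul : H →ₗ[k] H ⊗[k] H) d
  /-- `d(a)▷b = a₁ b S(a₂)` -/
  crossed : act ∘ₗ map d LinearMap.id = LinearMap.mul' k A
      ∘ₗ map LinearMap.id (LinearMap.mul' k A
            ∘ₗ map LinearMap.id (HopfAlgebra.antipode (R := k) : A →ₗ[k] A)
            ∘ₗ (TensorProduct.comm k A A).toLinearMap)
      ∘ₗ (TensorProduct.assoc k A A A).toLinearMap
      ∘ₗ map (Coalgebra.comul : A →ₗ[k] A ⊗[k] A) LinearMap.id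


section Helpers
variable {V : Type*} [AddCommMonoid V] [Module k V] [Coalgebra k V]
variable {M : Type*} [AddCommMonoid M] [Module k M]
variable {ι κ : Type*}

theorem sum_counit_smul_right {v : V} (r : Coalgebra.Repr k v ι) :
    ∑ i ∈ r.index, Coalgebra.counit (R := k) (r.right i) • r.left i = v := by
  have h := Coalgebra.sum_tmul_counit_eq r
  apply_fun (TensorProduct.rid k V) at h
  simp only [map_sum, rid_tmul, one_smul] at h
  exact h

theorem sum_counit_smul_left {v : V} (r : Coalgebra.Repr k v ι) :
    ∑ i ∈ r.index, Coalgebra.counit (R := k) (r.left i) • r.right i = v := by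
  have h := Coalgebra.sum_counit_tmul_eq r
  apply_fun (TensorProduct.lid k V) at h
  simp only [map_sum, lid_tmul, one_smul] at h
  exact h

theorem sum_repr_right (L : V →ₗ[k] M) {v : V} (r : Coalgebra.Repr k v ι) :
    ∑ i ∈ r.index, Coalgebra.counit (R := k) (r.right i) • L (r.left i) = L v := by
  simp only [← map_smul, ← map_sum]
  rw [sum_counit_smul_right]

theorem sum_repr_left (L : V →ₗ[k] M) {v : V} (r : Coalgebra.Repr k v ι) :
    ∑ i ∈ r.index, Coalgebra.counit (R := k) (r.left i) • L (r.right i) = L v := by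
  simp only [← map_smul, ← map_sum]
  rw [sum_counit_smul_left]

end Helpers
section Convolution
variable {C B : Type*} [AddCommMonoid C] [Module k C] [Ring B] [Algebra k B]

/-- Convolution product of linear maps with respect to an explicit comultiplication. -/
def convP (δ : C →ₗ[k] C ⊗[k] C) (f g : C →ₗ[k] B) : C →ₗ[k] B :=
  LinearMap.mul' k B ∘ₗ map f g ∘ₗ δ

theorem convP_apply (δ : C →ₗ[k] C ⊗[k] C) (f g : C →ₗ[k] B) (c : C) :
    convP k δ f g c = LinearMap.mul' k B (map f g (δ c)) := rfl

theorem convP_assoc (δ : C →ₗ[k] C ⊗[k] C)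
    (hco : (TensorProduct.assoc k C C C).toLinearMap ∘ₗ map δ LinearMap.id ∘ₗ δ
        = map LinearMap.id δ ∘ₗ δ) (f g h : C →ₗ[k] B) :
    convP k δ (convP k δ f g) h = convP k δ f (convP k δ g h) := by
  have e1 : map (convP k δ f g) h
      = map (LinearMap.mul' k B ∘ₗ map f g) h ∘ₗ map δ LinearMap.id := by
    apply TensorProduct.ext'
    intro x y
    simp [convP]
  have e3 : map f (convP k δ g h)
      = map f (LinearMap.mul' k B ∘ₗ map g h) ∘ₗ map LinearMap.id δ := by
    apply TensorProduct.ext'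
    intro x y
    simp [convP]
  have e2 : LinearMap.mul' k B ∘ₗ map (LinearMap.mul' k B ∘ₗ map f g) h
      = (LinearMap.mul' k B ∘ₗ map f (LinearMap.mul' k B ∘ₗ map g h)) ∘ₗ
        (TensorProduct.assoc k C C C).toLinearMap := by
    apply TensorProduct.ext_threefold
    intro x y z
    simp [mul_assoc]
  apply LinearMap.ext
  intro c
  have hcoc := congrArg (fun F => F c) hco
  simp only [LinearMap.comp_apply, LinearEquiv.coe_coe] at hcoc
  rw [convP_apply, convP_apply, e1, e3]
  simp only [LinearMap.comp_apply]
  rw [← LinearMap.comp_apply (LinearMap.mul' k B), e2]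
  simp only [LinearMap.comp_apply, LinearEquiv.coe_coe]
  rw [hcoc]

theorem convP_unit_left (δ : C →ₗ[k] C ⊗[k] C) (ν : C →ₗ[k] k)
    (hcu : map ν LinearMap.id ∘ₗ δ = TensorProduct.mk k k C 1) (f : C →ₗ[k] B) :
    convP k δ (Algebra.linearMap k B ∘ₗ ν) f = f := by
  have e1 : map (Algebra.linearMap k B ∘ₗ ν) f
      = map (Algebra.linearMap k B) f ∘ₗ map ν LinearMap.id := by
    apply TensorProduct.ext'
    intro x y
    simp
  apply LinearMap.ext
  intro c
  have hcuc := congrArg (fun F => F c) hcu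
  simp only [LinearMap.comp_apply] at hcuc
  rw [convP_apply, e1]
  simp only [LinearMap.comp_apply]
  rw [hcuc]
  simp

theorem convP_unit_right (δ : C →ₗ[k] C ⊗[k] C) (ν : C →ₗ[k] k)
    (hcu : map LinearMap.id ν ∘ₗ δ = (TensorProduct.mk k C k).flip 1) (f : C →ₗ[k] B) :
    convP k δ f (Algebra.linearMap k B ∘ₗ ν) = f := by
  have e1 : map f (Algebra.linearMap k B ∘ₗ ν)
      = map f (Algebra.linearMap k B) ∘ₗ map LinearMap.id ν := by
    apply TensorProduct.ext'
    intro x y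
    simp
  apply LinearMap.ext
  intro c
  have hcuc := congrArg (fun F => F c) hcu
  simp only [LinearMap.comp_apply] at hcuc
  rw [convP_apply, e1]
  simp only [LinearMap.comp_apply]
  rw [hcuc]
  simp

end Convolution
set_option maxHeartbeats 1000000
set_option synthInstance.maxHeartbeats 1000000

section ApplyLemmas
variable {ι κ : Type*}

theorem tmap_tmul (d : A →ₗ[k] H) (a : A) (h : H) :
    tmap k A H d (a ⊗ₜ[k] h) = d a * h := by
  simp [tmap]

theorem smap_tmul (a : A) (h : H) :
    smap k A H (a ⊗ₜ[k] h) = Coalgebra.counit (R := k) a • h := by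
  simp [smap]

theorem comul1_tmul {a : A} {h : H} (ra : Coalgebra.Repr k a ι) (rh : Coalgebra.Repr k h κ) :
    comul1 k A H (a ⊗ₜ[k] h)
      = ∑ i ∈ ra.index, ∑ m ∈ rh.index,
          (ra.left i ⊗ₜ[k] rh.left m) ⊗ₜ[k] (ra.right i ⊗ₜ[k] rh.right m) := by
  simp only [comul1, LinearMap.comp_apply, map_tmul, LinearEquiv.coe_coe, ← ra.eq, ← rh.eq]
  rw [TensorProduct.sum_tmul, map_sum (tensorTensorTensorComm k A A H H)]
  refine Finset.sum_congr rfl fun i _ => ?_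
  rw [TensorProduct.tmul_sum, map_sum (tensorTensorTensorComm k A A H H)]
  refine Finset.sum_congr rfl fun m _ => ?_
  simp [tensorTensorTensorComm_tmul]

theorem SS_tmul (d : A →ₗ[k] H) {a : A} (h : H) (ra : Coalgebra.Repr k a ι) :
    SS k A H d (a ⊗ₜ[k] h)
      = ∑ i ∈ ra.index,
          HopfAlgebra.antipode (R := k) (ra.left i) ⊗ₜ[k] (d (ra.right i) * h) := by
  simp only [SS, LinearMap.comp_apply, map_tmul, LinearEquiv.coe_coe, LinearMap.id_coe, id_eq,
    ← ra.eq]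
  rw [TensorProduct.sum_tmul, map_sum (TensorProduct.assoc k A A H), map_sum]
  refine Finset.sum_congr rfl fun i _ => ?_
  simp [assoc_tmul, tmap_tmul]

theorem circ_tmul (a : A) (h : H) (b : A) (g : H) :
    circ k A H ((a ⊗ₜ[k] h) ⊗ₜ[k] (b ⊗ₜ[k] g))
      = Coalgebra.counit (R := k) h • ((a * b) ⊗ₜ[k] g) := by
  simp [circ, tensorTensorTensorComm_tmul, tmul_smul]

theorem DLmap_tmul (d : A →ₗ[k] H) {b : A} {g : H} (rb : Coalgebra.Repr k b ι)
    (rg : Coalgebra.Repr k g κ) :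
    DLmap k A H d (b ⊗ₜ[k] g)
      = ∑ j ∈ rb.index, ∑ l ∈ rg.index,
          (d (rb.left j) * rg.left l) ⊗ₜ[k] (rb.right j ⊗ₜ[k] rg.right l) := by
  simp only [DLmap, LinearMap.comp_apply, comul1_tmul k A H rb rg, map_sum, map_tmul,
    tmap_tmul, LinearMap.id_coe, id_eq]

theorem DRmap_tmul {h : H} (a : A) (rh : Coalgebra.Repr k h κ) :
    DRmap k A H (a ⊗ₜ[k] h)
      = ∑ m ∈ rh.index, (a ⊗ₜ[k] rh.left m) ⊗ₜ[k] rh.right m := by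
  have ra := Coalgebra.Repr.arbitrary k a
  simp only [DRmap, LinearMap.comp_apply, comul1_tmul k A H ra rh, map_sum, map_tmul,
    smap_tmul, LinearMap.id_coe, id_eq]
  rw [Finset.sum_comm]
  refine Finset.sum_congr rfl fun m _ => ?_
  calc ∑ i ∈ ra.index, (ra.left i ⊗ₜ[k] rh.left m) ⊗ₜ[k]
          (Coalgebra.counit (R := k) (ra.right i) • rh.right m)
      = ∑ i ∈ ra.index, ((Coalgebra.counit (R := k) (ra.right i) • ra.left i) ⊗ₜ[k] rh.left m)
          ⊗ₜ[k] rh.right m := by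
        refine Finset.sum_congr rfl fun i _ => ?_
        rw [tmul_smul, ← smul_tmul', smul_tmul', smul_tmul']
    _ = (a ⊗ₜ[k] rh.left m) ⊗ₜ[k] rh.right m := by
        rw [← TensorProduct.sum_tmul, ← TensorProduct.sum_tmul, sum_counit_smul_right]

end ApplyLemmas
section AntipodeMul

/-- Representation of `comul (x * y)` built from representations of `x` and `y`. -/
def mulRepr {ι κ : Type*} {x y : A} (rx : Coalgebra.Repr k x ι) (ry : Coalgebra.Repr k y κ) :
    Coalgebra.Repr k (x * y) (ι × κ) where
  index := rx.index ×ˢ ry.index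
  left := fun p => rx.left p.1 * ry.left p.2
  right := fun p => rx.right p.1 * ry.right p.2
  eq := by
    rw [Finset.sum_product]
    have h : CoalgebraStruct.comul (R := k) (x * y)
        = CoalgebraStruct.comul (R := k) x * CoalgebraStruct.comul (R := k) y :=
      Bialgebra.comul_mul x y
    rw [h, ← rx.eq, ← ry.eq, Finset.sum_mul_sum]
    simp [Algebra.TensorProduct.tmul_mul_tmul]

theorem mulRepr_index {ι κ : Type*} {x y : A} (rx : Coalgebra.Repr k x ι) (ry : Coalgebra.Repr k y κ) :
    (mulRepr k A rx ry).index = rx.index ×ˢ ry.index := rfl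

end AntipodeMul
section Coassoc1

theorem comul1_coassoc :
    (TensorProduct.assoc k (A ⊗[k] A) (A ⊗[k] A) (A ⊗[k] A)).toLinearMap ∘ₗ
        map (comul1 k A A) LinearMap.id ∘ₗ comul1 k A A
      = map LinearMap.id (comul1 k A A) ∘ₗ comul1 k A A := by
  apply TensorProduct.ext'
  intro a b
  have ra := Coalgebra.Repr.arbitrary k a
  have rb := Coalgebra.Repr.arbitrary k b
  have r1a : ∀ i : (A × A), Coalgebra.Repr k (ra.left i) (A × A) := fun i => Coalgebra.Repr.arbitrary k _
  have r2a : ∀ i : (A × A), Coalgebra.Repr k (ra.right i) (A × A) := fun i => Coalgebra.Repr.arbitrary k _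
  have r1b : ∀ j : (A × A), Coalgebra.Repr k (rb.left j) (A × A) := fun j => Coalgebra.Repr.arbitrary k _
  have r2b : ∀ j : (A × A), Coalgebra.Repr k (rb.right j) (A × A) := fun j => Coalgebra.Repr.arbitrary k _
  set P : (A ⊗[k] (A ⊗[k] A)) ⊗[k] (A ⊗[k] (A ⊗[k] A)) →ₗ[k]
      (A ⊗[k] A) ⊗[k] ((A ⊗[k] A) ⊗[k] (A ⊗[k] A)) :=
    map LinearMap.id (tensorTensorTensorComm k A A A A).toLinearMap ∘ₗ
      (tensorTensorTensorComm k A (A ⊗[k] A) A (A ⊗[k] A)).toLinearMap with hP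
  have hPt : ∀ (u v w x y z : A),
      P ((u ⊗ₜ[k] (v ⊗ₜ[k] w)) ⊗ₜ[k] (x ⊗ₜ[k] (y ⊗ₜ[k] z)))
        = (u ⊗ₜ[k] x) ⊗ₜ[k] ((v ⊗ₜ[k] y) ⊗ₜ[k] (w ⊗ₜ[k] z)) := by
    intro u v w x y z
    simp [hP, tensorTensorTensorComm_tmul]
  -- left-hand side
  have hL : (TensorProduct.assoc k (A ⊗[k] A) (A ⊗[k] A) (A ⊗[k] A)).toLinearMap
        ((map (comul1 k A A) LinearMap.id) (comul1 k A A (a ⊗ₜ[k] b)))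
      = ∑ i ∈ ra.index, ∑ j ∈ rb.index, ∑ p ∈ (r1a i).index, ∑ q ∈ (r1b j).index,
          ((r1a i).left p ⊗ₜ[k] (r1b j).left q) ⊗ₜ[k]
            (((r1a i).right p ⊗ₜ[k] (r1b j).right q) ⊗ₜ[k] (ra.right i ⊗ₜ[k] rb.right j)) := by
    rw [comul1_tmul k A A ra rb]
    simp only [map_sum]
    refine Finset.sum_congr rfl fun i _ => ?_
    refine Finset.sum_congr rfl fun j _ => ?_
    rw [map_tmul, LinearMap.id_coe, id_eq, comul1_tmul k A A (r1a i) (r1b j)]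
    rw [TensorProduct.sum_tmul]
    simp only [map_sum]
    refine Finset.sum_congr rfl fun p _ => ?_
    rw [TensorProduct.sum_tmul]
    simp only [map_sum]
    refine Finset.sum_congr rfl fun q _ => ?_
    simp
  have hPL : P ((∑ i ∈ ra.index, ∑ p ∈ (r1a i).index,
          (r1a i).left p ⊗ₜ[k] ((r1a i).right p ⊗ₜ[k] ra.right i)) ⊗ₜ[k]
        (∑ j ∈ rb.index, ∑ q ∈ (r1b j).index,
          (r1b j).left q ⊗ₜ[k] ((r1b j).right q ⊗ₜ[k] rb.right j)))
      = ∑ i ∈ ra.index, ∑ j ∈ rb.index, ∑ p ∈ (r1a i).index, ∑ q ∈ (r1b j).index,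
          ((r1a i).left p ⊗ₜ[k] (r1b j).left q) ⊗ₜ[k]
            (((r1a i).right p ⊗ₜ[k] (r1b j).right q) ⊗ₜ[k] (ra.right i ⊗ₜ[k] rb.right j)) := by
    rw [TensorProduct.sum_tmul]
    simp only [map_sum]
    refine Finset.sum_congr rfl fun i _ => ?_
    have expand : P ((∑ p ∈ (r1a i).index,
            (r1a i).left p ⊗ₜ[k] ((r1a i).right p ⊗ₜ[k] ra.right i)) ⊗ₜ[k]
          (∑ j ∈ rb.index, ∑ q ∈ (r1b j).index,
            (r1b j).left q ⊗ₜ[k] ((r1b j).right q ⊗ₜ[k] rb.right j)))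
        = ∑ p ∈ (r1a i).index, ∑ j ∈ rb.index, ∑ q ∈ (r1b j).index,
            ((r1a i).left p ⊗ₜ[k] (r1b j).left q) ⊗ₜ[k]
              (((r1a i).right p ⊗ₜ[k] (r1b j).right q) ⊗ₜ[k] (ra.right i ⊗ₜ[k] rb.right j)) := by
      rw [TensorProduct.sum_tmul]
      simp only [map_sum]
      refine Finset.sum_congr rfl fun p _ => ?_
      rw [TensorProduct.tmul_sum]
      simp only [map_sum]
      refine Finset.sum_congr rfl fun j _ => ?_
      rw [TensorProduct.tmul_sum]
      simp only [map_sum]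
      refine Finset.sum_congr rfl fun q _ => ?_
      exact hPt _ _ _ _ _ _
    rw [expand]
    exact Finset.sum_comm
  -- right-hand side
  have hR : (map LinearMap.id (comul1 k A A)) (comul1 k A A (a ⊗ₜ[k] b))
      = ∑ i ∈ ra.index, ∑ j ∈ rb.index, ∑ p ∈ (r2a i).index, ∑ q ∈ (r2b j).index,
          (ra.left i ⊗ₜ[k] rb.left j) ⊗ₜ[k]
            (((r2a i).left p ⊗ₜ[k] (r2b j).left q) ⊗ₜ[k]
              ((r2a i).right p ⊗ₜ[k] (r2b j).right q)) := by
    rw [comul1_tmul k A A ra rb]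
    simp only [map_sum]
    refine Finset.sum_congr rfl fun i _ => ?_
    refine Finset.sum_congr rfl fun j _ => ?_
    rw [map_tmul, LinearMap.id_coe, id_eq, comul1_tmul k A A (r2a i) (r2b j)]
    rw [TensorProduct.tmul_sum]
    refine Finset.sum_congr rfl fun p _ => ?_
    rw [TensorProduct.tmul_sum]
  have hPR : P ((∑ i ∈ ra.index, ∑ p ∈ (r2a i).index,
          ra.left i ⊗ₜ[k] ((r2a i).left p ⊗ₜ[k] (r2a i).right p)) ⊗ₜ[k]
        (∑ j ∈ rb.index, ∑ q ∈ (r2b j).index,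
          rb.left j ⊗ₜ[k] ((r2b j).left q ⊗ₜ[k] (r2b j).right q)))
      = ∑ i ∈ ra.index, ∑ j ∈ rb.index, ∑ p ∈ (r2a i).index, ∑ q ∈ (r2b j).index,
          (ra.left i ⊗ₜ[k] rb.left j) ⊗ₜ[k]
            (((r2a i).left p ⊗ₜ[k] (r2b j).left q) ⊗ₜ[k]
              ((r2a i).right p ⊗ₜ[k] (r2b j).right q)) := by
    rw [TensorProduct.sum_tmul]
    simp only [map_sum]
    refine Finset.sum_congr rfl fun i _ => ?_
    have expand : P ((∑ p ∈ (r2a i).index,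
            ra.left i ⊗ₜ[k] ((r2a i).left p ⊗ₜ[k] (r2a i).right p)) ⊗ₜ[k]
          (∑ j ∈ rb.index, ∑ q ∈ (r2b j).index,
            rb.left j ⊗ₜ[k] ((r2b j).left q ⊗ₜ[k] (r2b j).right q)))
        = ∑ p ∈ (r2a i).index, ∑ j ∈ rb.index, ∑ q ∈ (r2b j).index,
            (ra.left i ⊗ₜ[k] rb.left j) ⊗ₜ[k]
              (((r2a i).left p ⊗ₜ[k] (r2b j).left q) ⊗ₜ[k]
                ((r2a i).right p ⊗ₜ[k] (r2b j).right q)) := by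
      rw [TensorProduct.sum_tmul]
      simp only [map_sum]
      refine Finset.sum_congr rfl fun p _ => ?_
      rw [TensorProduct.tmul_sum]
      simp only [map_sum]
      refine Finset.sum_congr rfl fun j _ => ?_
      rw [TensorProduct.tmul_sum]
      simp only [map_sum]
      refine Finset.sum_congr rfl fun q _ => ?_
      exact hPt _ _ _ _ _ _
    rw [expand]
    exact Finset.sum_comm
  simp only [LinearMap.comp_apply, LinearEquiv.coe_coe]
  refine hL.trans (hPL.symm.trans ?_)
  rw [Coalgebra.sum_tmul_tmul_eq ra r1a r2a, Coalgebra.sum_tmul_tmul_eq rb r1b r2b]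
  exact hPR.trans hR.symm

end Coassoc1
section Counit1

theorem counit1_tmul (a : A) (h : H) :
    counit1 k A H (a ⊗ₜ[k] h)
      = Coalgebra.counit (R := k) a * Coalgebra.counit (R := k) h := by
  simp [counit1, smul_eq_mul]

theorem comul1_counit_left :
    map (counit1 k A A) LinearMap.id ∘ₗ comul1 k A A
      = TensorProduct.mk k k (A ⊗[k] A) 1 := by
  apply TensorProduct.ext'
  intro a b
  have ra := Coalgebra.Repr.arbitrary k a
  have rb := Coalgebra.Repr.arbitrary k b
  simp only [LinearMap.comp_apply, comul1_tmul k A A ra rb, map_sum, map_tmul,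
    counit1_tmul k A A, LinearMap.id_coe, id_eq, mk_apply]
  have step1 : ∀ i : (A × A), ∑ j ∈ rb.index,
      (Coalgebra.counit (R := k) (ra.left i) * Coalgebra.counit (R := k) (rb.left j))
        ⊗ₜ[k] (ra.right i ⊗ₜ[k] rb.right j)
      = Coalgebra.counit (R := k) (ra.left i) • ((1 : k) ⊗ₜ[k] (ra.right i ⊗ₜ[k] b)) := by
    intro i
    have e : ∀ j : (A × A),
        (Coalgebra.counit (R := k) (ra.left i) * Coalgebra.counit (R := k) (rb.left j))
          ⊗ₜ[k] (ra.right i ⊗ₜ[k] rb.right j)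
        = Coalgebra.counit (R := k) (ra.left i) • (Coalgebra.counit (R := k) (rb.left j) •
            ((TensorProduct.mk k k (A ⊗[k] A) 1 ∘ₗ TensorProduct.mk k A A (ra.right i))
              (rb.right j))) := fun j => by
      simp only [LinearMap.comp_apply, mk_apply, smul_smul, smul_tmul', smul_eq_mul, mul_one]
    rw [Finset.sum_congr rfl (fun j _ => e j), ← Finset.smul_sum,
      sum_repr_left k (TensorProduct.mk k k (A ⊗[k] A) 1 ∘ₗ TensorProduct.mk k A A (ra.right i)) rb]
    simp
  rw [Finset.sum_congr rfl (fun i _ => step1 i)]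
  have e2 : ∀ i : (A × A), ((1:k) ⊗ₜ[k] (ra.right i ⊗ₜ[k] b))
      = (TensorProduct.mk k k (A ⊗[k] A) 1 ∘ₗ (TensorProduct.mk k A A).flip b) (ra.right i) :=
    fun i => by simp
  rw [Finset.sum_congr rfl (fun i _ => by rw [e2 i]),
    sum_repr_left k (TensorProduct.mk k k (A ⊗[k] A) 1 ∘ₗ (TensorProduct.mk k A A).flip b) ra]
  simp

theorem comul1_counit_right :
    map LinearMap.id (counit1 k A A) ∘ₗ comul1 k A A
      = (TensorProduct.mk k (A ⊗[k] A) k).flip 1 := by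
  apply TensorProduct.ext'
  intro a b
  have ra := Coalgebra.Repr.arbitrary k a
  have rb := Coalgebra.Repr.arbitrary k b
  simp only [LinearMap.comp_apply, comul1_tmul k A A ra rb, map_sum, map_tmul,
    counit1_tmul k A A, LinearMap.id_coe, id_eq, LinearMap.flip_apply, mk_apply]
  have step1 : ∀ i : (A × A), ∑ j ∈ rb.index,
      (ra.left i ⊗ₜ[k] rb.left j) ⊗ₜ[k]
        (Coalgebra.counit (R := k) (ra.right i) * Coalgebra.counit (R := k) (rb.right j))
      = Coalgebra.counit (R := k) (ra.right i) • ((ra.left i ⊗ₜ[k] b) ⊗ₜ[k] (1 : k)) := by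
    intro i
    have e : ∀ j : (A × A),
        (ra.left i ⊗ₜ[k] rb.left j) ⊗ₜ[k]
          (Coalgebra.counit (R := k) (ra.right i) * Coalgebra.counit (R := k) (rb.right j))
        = Coalgebra.counit (R := k) (ra.right i) • (Coalgebra.counit (R := k) (rb.right j) •
            (((TensorProduct.mk k (A ⊗[k] A) k).flip 1 ∘ₗ TensorProduct.mk k A A (ra.left i))
              (rb.left j))) := fun j => by
      simp only [LinearMap.comp_apply, mk_apply, LinearMap.flip_apply, smul_smul]
      rw [← tmul_smul, smul_eq_mul, mul_one]
    rw [Finset.sum_congr rfl (fun j _ => e j), ← Finset.smul_sum,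
      sum_repr_right k ((TensorProduct.mk k (A ⊗[k] A) k).flip 1
        ∘ₗ TensorProduct.mk k A A (ra.left i)) rb]
    simp
  rw [Finset.sum_congr rfl (fun i _ => step1 i)]
  have e2 : ∀ i : (A × A), ((ra.left i ⊗ₜ[k] b) ⊗ₜ[k] (1:k))
      = ((TensorProduct.mk k (A ⊗[k] A) k).flip 1 ∘ₗ (TensorProduct.mk k A A).flip b)
          (ra.left i) := fun i => by simp
  rw [Finset.sum_congr rfl (fun i _ => by rw [e2 i]),
    sum_repr_right k ((TensorProduct.mk k (A ⊗[k] A) k).flip 1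
      ∘ₗ (TensorProduct.mk k A A).flip b) ra]
  simp

end Counit1
section AntipodeAntiMul

open HopfAlgebra

theorem conv_mul_SSmul :
    convP k (comul1 k A A) (LinearMap.mul' k A)
        ((antipode (R := k) : A →ₗ[k] A) ∘ₗ LinearMap.mul' k A)
      = Algebra.linearMap k A ∘ₗ counit1 k A A := by
  apply TensorProduct.ext'
  intro x y
  have rx := Coalgebra.Repr.arbitrary k x
  have ry := Coalgebra.Repr.arbitrary k y
  rw [convP_apply, comul1_tmul k A A rx ry]
  simp only [map_sum, map_tmul, LinearMap.comp_apply, LinearMap.mul'_apply]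
  have : ∑ i ∈ rx.index, ∑ j ∈ ry.index,
      (rx.left i * ry.left j) * antipode (R := k) (rx.right i * ry.right j)
      = ∑ p ∈ (mulRepr k A rx ry).index,
          (mulRepr k A rx ry).left p * antipode (R := k) ((mulRepr k A rx ry).right p) := by
    rw [mulRepr_index]
    exact (Finset.sum_product rx.index ry.index (fun p =>
      (mulRepr k A rx ry).left p * antipode (R := k) ((mulRepr k A rx ry).right p))).symm
  rw [this, HopfAlgebra.sum_mul_antipode_eq_smul]
  simp [counit1_tmul, Algebra.algebraMap_eq_smul_one]

theorem conv_SSswap_mul :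
    convP k (comul1 k A A)
        (LinearMap.mul' k A ∘ₗ map (antipode (R := k) : A →ₗ[k] A) (antipode (R := k))
          ∘ₗ (TensorProduct.comm k A A).toLinearMap)
        (LinearMap.mul' k A)
      = Algebra.linearMap k A ∘ₗ counit1 k A A := by
  apply TensorProduct.ext'
  intro x y
  have rx := Coalgebra.Repr.arbitrary k x
  have ry := Coalgebra.Repr.arbitrary k y
  rw [convP_apply, comul1_tmul k A A rx ry]
  simp only [map_sum, map_tmul, LinearMap.comp_apply, LinearEquiv.coe_coe, comm_tmul,
    LinearMap.mul'_apply]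
  have step : ∀ j : (A × A), ∑ i ∈ rx.index,
      antipode (R := k) (ry.left j) * antipode (R := k) (rx.left i) *
        (rx.right i * ry.right j)
      = Coalgebra.counit (R := k) x • (antipode (R := k) (ry.left j) * ry.right j) := by
    intro j
    have e : ∀ i : (A × A),
        antipode (R := k) (ry.left j) * antipode (R := k) (rx.left i) *
          (rx.right i * ry.right j)
        = antipode (R := k) (ry.left j) *
            ((antipode (R := k) (rx.left i) * rx.right i) * ry.right j) := fun i => by
      simp only [mul_assoc]
    rw [Finset.sum_congr rfl (fun i _ => e i), ← Finset.mul_sum, ← Finset.sum_mul,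
      HopfAlgebra.sum_antipode_mul_eq_smul rx]
    rw [smul_mul_assoc, one_mul, mul_smul_comm]
  rw [Finset.sum_comm, Finset.sum_congr rfl (fun j _ => step j), ← Finset.smul_sum,
    HopfAlgebra.sum_antipode_mul_eq_smul ry]
  simp [counit1_tmul, Algebra.algebraMap_eq_smul_one, smul_smul]

theorem antipode_mul_antidistrib (x y : A) :
    antipode (R := k) (x * y) = antipode (R := k) y * antipode (R := k) x := by
  have main : (antipode (R := k) : A →ₗ[k] A) ∘ₗ LinearMap.mul' k A
      = LinearMap.mul' k A ∘ₗ map (antipode (R := k) : A →ₗ[k] A) (antipode (R := k))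
          ∘ₗ (TensorProduct.comm k A A).toLinearMap := by
    set F := (antipode (R := k) : A →ₗ[k] A) ∘ₗ LinearMap.mul' k A with hF
    set G := LinearMap.mul' k A ∘ₗ map (antipode (R := k) : A →ₗ[k] A) (antipode (R := k))
        ∘ₗ (TensorProduct.comm k A A).toLinearMap with hG
    have hu := comul1_counit_left k A
    have hu' := comul1_counit_right k A
    have hco := comul1_coassoc k A
    calc F = convP k (comul1 k A A) (Algebra.linearMap k A ∘ₗ counit1 k A A) F := by
            rw [convP_unit_left k (comul1 k A A) (counit1 k A A) hu]
      _ = convP k (comul1 k A A)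
            (convP k (comul1 k A A) G (LinearMap.mul' k A)) F := by
            rw [conv_SSswap_mul]
      _ = convP k (comul1 k A A) G
            (convP k (comul1 k A A) (LinearMap.mul' k A) F) := by
            rw [convP_assoc k (comul1 k A A) hco]
      _ = convP k (comul1 k A A) G (Algebra.linearMap k A ∘ₗ counit1 k A A) := by
            rw [conv_mul_SSmul]
      _ = G := convP_unit_right k (comul1 k A A) (counit1 k A A) hu' G
  have := congrArg (fun F : A ⊗[k] A →ₗ[k] A => F (x ⊗ₜ[k] y)) main
  simpa using this

end AntipodeAntiMul
section PhiSection

open HopfAlgebra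

/-- `G0 (b ⊗ g) = S(b) ⊗ ε(g)1`. -/
def G0 : A ⊗[k] H →ₗ[k] A ⊗[k] H :=
  map (antipode (R := k) : A →ₗ[k] A)
    (Algebra.linearMap k H ∘ₗ (Coalgebra.counit : H →ₗ[k] k))

/-- `F0 ((a ⊗ h) ⊗ m) = ε(h) 𝒮(a ⊗ m)`. -/
def F0 (d : A →ₗ[k] H) : (A ⊗[k] H) ⊗[k] H →ₗ[k] A ⊗[k] H :=
  SS k A H d
    ∘ₗ map LinearMap.id
        ((TensorProduct.lid k H).toLinearMap ∘ₗ map (Coalgebra.counit : H →ₗ[k] k) LinearMap.id)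
    ∘ₗ (TensorProduct.assoc k A H H).toLinearMap

/-- The bridge map `Φ((a⊗h) ⊗ (m ⊗ (b⊗g))) = ε(h)ε(g) (S(b)S(a₁)) ⊗ d(a₂)m`. -/
def Phi (d : A →ₗ[k] H) : (A ⊗[k] H) ⊗[k] (H ⊗[k] (A ⊗[k] H)) →ₗ[k] A ⊗[k] H :=
  LinearMap.mul' k (A ⊗[k] H)
    ∘ₗ map (G0 k A H) (F0 k A H d)
    ∘ₗ (TensorProduct.comm k ((A ⊗[k] H) ⊗[k] H) (A ⊗[k] H)).toLinearMap
    ∘ₗ (TensorProduct.assoc k (A ⊗[k] H) H (A ⊗[k] H)).symm.toLinearMap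

theorem Phi_tmul (d : A →ₗ[k] H) {a : A} (h m : H) (b : A) (g : H)
    (ra : Coalgebra.Repr k a (A × A)) :
    Phi k A H d ((a ⊗ₜ[k] h) ⊗ₜ[k] (m ⊗ₜ[k] (b ⊗ₜ[k] g)))
      = ∑ i ∈ ra.index,
          (Coalgebra.counit (R := k) h * Coalgebra.counit (R := k) g) •
            ((antipode (R := k) b * antipode (R := k) (ra.left i))
              ⊗ₜ[k] (d (ra.right i) * m)) := by
  simp only [Phi, LinearMap.comp_apply, LinearEquiv.coe_coe, assoc_symm_tmul, comm_tmul,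
    map_tmul]
  simp only [G0, F0, map_tmul, LinearMap.comp_apply, LinearEquiv.coe_coe, assoc_tmul,
    lid_tmul, LinearMap.id_coe, id_eq, Algebra.linearMap_apply]
  rw [tmul_smul, map_smul, SS_tmul k A H d m ra, tmul_smul, map_smul, tmul_sum, map_sum]
  rw [Finset.smul_sum]
  refine Finset.sum_congr rfl fun i _ => ?_
  rw [LinearMap.mul'_apply, Algebra.TensorProduct.tmul_mul_tmul, ← Algebra.smul_def,
    tmul_smul, smul_smul]

end PhiSection
section ClaimA

open HopfAlgebra

theorem claimA (d : A →ₗ[k] H)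
    (hdc : ∀ x : A, Coalgebra.counit (R := k) (d x) = Coalgebra.counit (R := k) x) :
    circ k A H ∘ₗ map (SS k A H d) (SS k A H d)
        ∘ₗ (TensorProduct.comm k (A ⊗[k] H) (A ⊗[k] H)).toLinearMap
      = Phi k A H d ∘ₗ (TensorProduct.assoc k (A ⊗[k] H) H (A ⊗[k] H)).toLinearMap
        ∘ₗ map (DRmap k A H) LinearMap.id := by
  apply TensorProduct.ext_fourfold'
  intro a h b g
  have ra := Coalgebra.Repr.arbitrary k a
  have rb := Coalgebra.Repr.arbitrary k b
  have rh := Coalgebra.Repr.arbitrary k h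
  set M : A →ₗ[k] A ⊗[k] H := ∑ i ∈ ra.index, Coalgebra.counit (R := k) g •
      (((TensorProduct.mk k A H).flip (d (ra.right i) * h))
        ∘ₗ LinearMap.mulRight k (antipode (R := k) (ra.left i))
        ∘ₗ (antipode (R := k) : A →ₗ[k] A)) with hM
  have hMc : ∀ c : A, M c = ∑ i ∈ ra.index, Coalgebra.counit (R := k) g •
      ((antipode (R := k) c * antipode (R := k) (ra.left i)) ⊗ₜ[k] (d (ra.right i) * h)) := by
    intro c
    simp [hM, LinearMap.sum_apply, LinearMap.smul_apply, LinearMap.comp_apply,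
      LinearMap.flip_apply, mk_apply, LinearMap.mulRight_apply]
  set N : H →ₗ[k] A ⊗[k] H := ∑ i ∈ ra.index, Coalgebra.counit (R := k) g •
      (TensorProduct.mk k A H (antipode (R := k) b * antipode (R := k) (ra.left i))
        ∘ₗ LinearMap.mulLeft k (d (ra.right i))) with hN
  have hNc : ∀ m : H, N m = ∑ i ∈ ra.index, Coalgebra.counit (R := k) g •
      ((antipode (R := k) b * antipode (R := k) (ra.left i)) ⊗ₜ[k] (d (ra.right i) * m)) := by
    intro m
    simp [hN, LinearMap.sum_apply, LinearMap.smul_apply, LinearMap.comp_apply,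
      mk_apply, LinearMap.mulLeft_apply]
  -- left-hand side equals M b
  have hLHS : circ k A H ((map (SS k A H d) (SS k A H d))
        ((TensorProduct.comm k (A ⊗[k] H) (A ⊗[k] H)).toLinearMap
          ((a ⊗ₜ[k] h) ⊗ₜ[k] (b ⊗ₜ[k] g))))
      = M b := by
    simp only [LinearEquiv.coe_coe, comm_tmul, map_tmul]
    rw [SS_tmul k A H d g rb, SS_tmul k A H d h ra]
    rw [TensorProduct.sum_tmul]
    rw [map_sum (circ k A H)]
    have step : ∀ j : (A × A), circ k A H
        ((antipode (R := k) (rb.left j) ⊗ₜ[k] (d (rb.right j) * g)) ⊗ₜ[k]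
          ∑ i ∈ ra.index, antipode (R := k) (ra.left i) ⊗ₜ[k] (d (ra.right i) * h))
        = Coalgebra.counit (R := k) (rb.right j) • M (rb.left j) := by
      intro j
      rw [TensorProduct.tmul_sum, map_sum (circ k A H), hMc, Finset.smul_sum]
      refine Finset.sum_congr rfl fun i _ => ?_
      rw [circ_tmul, Bialgebra.counit_mul, hdc, mul_smul]
    rw [Finset.sum_congr rfl (fun j _ => step j), sum_repr_right k M rb]
  -- right-hand side equals N h
  have hRHS : Phi k A H d ((TensorProduct.assoc k (A ⊗[k] H) H (A ⊗[k] H)).toLinearMap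
        ((map (DRmap k A H) LinearMap.id) ((a ⊗ₜ[k] h) ⊗ₜ[k] (b ⊗ₜ[k] g))))
      = N h := by
    rw [map_tmul, LinearMap.id_coe, id_eq, DRmap_tmul k A H a rh, TensorProduct.sum_tmul,
      map_sum, map_sum]
    have step : ∀ m : (H × H),
        Phi k A H d ((TensorProduct.assoc k (A ⊗[k] H) H (A ⊗[k] H)).toLinearMap
          (((a ⊗ₜ[k] rh.left m) ⊗ₜ[k] rh.right m) ⊗ₜ[k] (b ⊗ₜ[k] g)))
        = Coalgebra.counit (R := k) (rh.left m) • N (rh.right m) := by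
      intro m
      rw [LinearEquiv.coe_coe, assoc_tmul, Phi_tmul k A H d (rh.left m) (rh.right m) b g ra,
        hNc, Finset.smul_sum]
      refine Finset.sum_congr rfl fun i _ => ?_
      rw [mul_smul]
    rw [Finset.sum_congr rfl (fun m _ => step m), sum_repr_left k N rh]
  simp only [LinearMap.comp_apply]
  rw [hLHS, hRHS, hMc b, hNc h]

end ClaimA
section ClaimB

open HopfAlgebra

theorem claimB (d : A →ₗ[k] H)
    (hdm : ∀ x y : A, d (x * y) = d x * d y)
    (hsym : map LinearMap.id d ∘ₗ (Coalgebra.comul : A →ₗ[k] A ⊗[k] A)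
      = map LinearMap.id d ∘ₗ (TensorProduct.comm k A A).toLinearMap
          ∘ₗ (Coalgebra.comul : A →ₗ[k] A ⊗[k] A)) :
    SS k A H d ∘ₗ circ k A H = Phi k A H d ∘ₗ map LinearMap.id (DLmap k A H d) := by
  apply TensorProduct.ext_fourfold'
  intro a h b g
  have ra := Coalgebra.Repr.arbitrary k a
  have rb := Coalgebra.Repr.arbitrary k b
  have rg := Coalgebra.Repr.arbitrary k g
  have hsymb : ∑ j ∈ rb.index, rb.left j ⊗ₜ[k] d (rb.right j)
      = ∑ j ∈ rb.index, rb.right j ⊗ₜ[k] d (rb.left j) := by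
    have h0 := LinearMap.congr_fun hsym b
    simp only [LinearMap.comp_apply, LinearEquiv.coe_coe] at h0
    rw [show (Coalgebra.comul : A →ₗ[k] A ⊗[k] A) b = CoalgebraStruct.comul (R := k) b from rfl,
      ← rb.eq] at h0
    simpa only [map_sum, map_tmul, comm_tmul, LinearMap.id_coe, id_eq] using h0
  set W : (A × A) → (A ⊗[k] H →ₗ[k] A ⊗[k] H) := fun i =>
    map (LinearMap.mulRight k (antipode (R := k) (ra.left i)) ∘ₗ (antipode (R := k) : A →ₗ[k] A))
        (LinearMap.mulRight k g ∘ₗ LinearMap.mulLeft k (d (ra.right i))) with hW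
  have hWc : ∀ (i : (A × A)) (c : A) (n : H), W i (c ⊗ₜ[k] n)
      = (antipode (R := k) c * antipode (R := k) (ra.left i)) ⊗ₜ[k] ((d (ra.right i) * n) * g) := by
    intro i c n
    simp [hW, LinearMap.mulRight_apply, LinearMap.mulLeft_apply]
  -- left-hand side
  have hLHS : SS k A H d (circ k A H ((a ⊗ₜ[k] h) ⊗ₜ[k] (b ⊗ₜ[k] g)))
      = Coalgebra.counit (R := k) h • ∑ i ∈ ra.index, ∑ j ∈ rb.index,
          (antipode (R := k) (rb.right j) * antipode (R := k) (ra.left i)) ⊗ₜ[k]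
            ((d (ra.right i) * d (rb.left j)) * g) := by
    rw [circ_tmul, map_smul, SS_tmul k A H d g (mulRepr k A ra rb)]
    congr 1
    rw [show ∑ p ∈ (mulRepr k A ra rb).index,
          antipode (R := k) ((mulRepr k A ra rb).left p)
            ⊗ₜ[k] (d ((mulRepr k A ra rb).right p) * g)
        = ∑ i ∈ ra.index, ∑ j ∈ rb.index,
            antipode (R := k) (ra.left i * rb.left j)
              ⊗ₜ[k] (d (ra.right i * rb.right j) * g) from
      Finset.sum_product ra.index rb.index _]
    have e1 : ∀ (i : (A × A)) (j : (A × A)),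
        antipode (R := k) (ra.left i * rb.left j) ⊗ₜ[k] (d (ra.right i * rb.right j) * g)
        = W i (rb.left j ⊗ₜ[k] d (rb.right j)) := by
      intro i j
      rw [hWc, antipode_mul_antidistrib k A, hdm]
    rw [Finset.sum_congr rfl fun i _ => Finset.sum_congr rfl fun j _ => e1 i j]
    rw [Finset.sum_congr rfl fun i _ => (map_sum (W i) _ _).symm]
    rw [Finset.sum_congr rfl fun i _ => congrArg (W i) hsymb]
    rw [Finset.sum_congr rfl fun i _ => map_sum (W i) _ _]
    refine Finset.sum_congr rfl fun i _ => Finset.sum_congr rfl fun j _ => ?_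
    rw [hWc]
  -- right-hand side
  have hRHS : Phi k A H d ((map LinearMap.id (DLmap k A H d)) ((a ⊗ₜ[k] h) ⊗ₜ[k] (b ⊗ₜ[k] g)))
      = ∑ j ∈ rb.index, ∑ i ∈ ra.index, Coalgebra.counit (R := k) h •
          ((antipode (R := k) (rb.right j) * antipode (R := k) (ra.left i)) ⊗ₜ[k]
            (d (ra.right i) * (d (rb.left j) * g))) := by
    rw [map_tmul, LinearMap.id_coe, id_eq, DLmap_tmul k A H d rb rg]
    rw [TensorProduct.tmul_sum, map_sum]
    refine Finset.sum_congr rfl fun j _ => ?_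
    rw [TensorProduct.tmul_sum, map_sum]
    set L : (A × A) → (H →ₗ[k] A ⊗[k] H) := fun i =>
      TensorProduct.mk k A H (antipode (R := k) (rb.right j) * antipode (R := k) (ra.left i))
        ∘ₗ LinearMap.mulLeft k (d (ra.right i)) ∘ₗ LinearMap.mulLeft k (d (rb.left j)) with hL
    have step : ∀ l : (H × H),
        Phi k A H d ((a ⊗ₜ[k] h) ⊗ₜ[k]
          ((d (rb.left j) * rg.left l) ⊗ₜ[k] (rb.right j ⊗ₜ[k] rg.right l)))
        = Coalgebra.counit (R := k) (rg.right l) •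
            (Coalgebra.counit (R := k) h •
              ∑ i ∈ ra.index, L i (rg.left l)) := by
      intro l
      rw [Phi_tmul k A H d h (d (rb.left j) * rg.left l) (rb.right j) (rg.right l) ra]
      rw [Finset.smul_sum, Finset.smul_sum]
      refine Finset.sum_congr rfl fun i _ => ?_
      simp only [hL, LinearMap.comp_apply, LinearMap.mulLeft_apply, mk_apply]
      rw [mul_comm (Coalgebra.counit (R := k) h) (Coalgebra.counit (R := k) (rg.right l)),
        mul_smul]
    rw [Finset.sum_congr rfl fun l _ => step l]
    have e2 : ∀ l : (H × H),
        Coalgebra.counit (R := k) (rg.right l) •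
            (Coalgebra.counit (R := k) h • ∑ i ∈ ra.index, L i (rg.left l))
        = Coalgebra.counit (R := k) (rg.right l) •
            ((Coalgebra.counit (R := k) h • ∑ i ∈ ra.index, L i : H →ₗ[k] A ⊗[k] H)
              (rg.left l)) := by
      intro l
      simp [LinearMap.smul_apply, LinearMap.sum_apply]
    rw [Finset.sum_congr rfl fun l _ => e2 l,
      sum_repr_right k (Coalgebra.counit (R := k) h •
        (∑ i ∈ ra.index, L i : H →ₗ[k] A ⊗[k] H)) rg]
    simp only [LinearMap.smul_apply, LinearMap.sum_apply, Finset.smul_sum, hL,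
      LinearMap.comp_apply, LinearMap.mulLeft_apply, mk_apply]
  simp only [LinearMap.comp_apply]
  rw [hLHS, hRHS, Finset.smul_sum]
  rw [Finset.sum_congr rfl fun i _ => Finset.smul_sum (r := Coalgebra.counit (R := k) h)]
  rw [Finset.sum_comm]
  refine Finset.sum_congr rfl fun j _ => Finset.sum_congr rfl fun i _ => ?_
  rw [mul_assoc]

end ClaimB

/-- Proposition 2.7(i): if `a₁ ⊗ d(a₂) = a₂ ⊗ d(a₁)` for all `a ∈ A` then `𝒮` is
anti-multiplicative for `∘` on the cotensor product. -/
theorem statement10 (act : H ⊗[k] A →ₗ[k] A) (d : A →ₗ[k] H)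
    (hcm : HopfCrossedModule k A H act d)
    (hsym : map LinearMap.id d ∘ₗ (Coalgebra.comul : A →ₗ[k] A ⊗[k] A)
      = map LinearMap.id d ∘ₗ (TensorProduct.comm k A A).toLinearMap
          ∘ₗ (Coalgebra.comul : A →ₗ[k] A ⊗[k] A)) :
    ∀ x ∈ cot k A H d,
      SS k A H d (circ k A H x)
        = circ k A H
            (map (SS k A H d) (SS k A H d) ((TensorProduct.comm k (A ⊗[k] H) (A ⊗[k] H)) x)) := by
  intro x hx
  have hdc : ∀ y : A, Coalgebra.counit (R := k) (d y) = Coalgebra.counit (R := k) y :=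
    fun y => LinearMap.congr_fun hcm.d_counit y
  have hA := claimA k A H d hdc
  have hB := claimB k A H d hcm.d_mul hsym
  have hx' : (TensorProduct.assoc k (A ⊗[k] H) H (A ⊗[k] H)).toLinearMap
      ((map (DRmap k A H) LinearMap.id) x) = (map LinearMap.id (DLmap k A H d)) x := hx
  calc SS k A H d (circ k A H x) = (SS k A H d ∘ₗ circ k A H) x := rfl
    _ = (Phi k A H d ∘ₗ map LinearMap.id (DLmap k A H d)) x := by rw [hB]
    _ = Phi k A H d ((map LinearMap.id (DLmap k A H d)) x) := rfl
    _ = Phi k A H d ((TensorProduct.assoc k (A ⊗[k] H) H (A ⊗[k] H)).toLinearMap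
          ((map (DRmap k A H) LinearMap.id) x)) := by rw [hx']
    _ = (Phi k A H d ∘ₗ (TensorProduct.assoc k (A ⊗[k] H) H (A ⊗[k] H)).toLinearMap
          ∘ₗ map (DRmap k A H) LinearMap.id) x := rfl
    _ = (circ k A H ∘ₗ map (SS k A H d) (SS k A H d)
          ∘ₗ (TensorProduct.comm k (A ⊗[k] H) (A ⊗[k] H)).toLinearMap) x := by rw [hA]
    _ = circ k A H (map (SS k A H d) (SS k A H d)
          ((TensorProduct.comm k (A ⊗[k] H) (A ⊗[k] H)) x)) := rfl

end
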